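/- Suppose in ℤ × ℤ/2^N three cyclic subgroups ⟨(x,a)⟩, ⟨(y,b)⟩, ⟨(z,c)⟩ pairwise join to the full group ℤ × ℤ/2^N. Then at least two of the residues a, b, c are odd. -/

import Mathlib

lemma aux_join_ne_top (N : ℕ) (hN : 1 ≤ N) (x y : ℤ) (s t : ZMod (2 ^ N)) :
    AddSubgroup.zmultiples ((x, 2 * s) : ℤ × ZMod (2 ^ N)) ⊔
      AddSubgroup.zmultiples ((y, 2 * t) : ℤ × ZMod (2 ^ N)) ≠ ⊤ := by
  intro h
  have hmem : ((0, 1) : ℤ × ZMod (2 ^ N)) ∈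
      AddSubgroup.zmultiples ((x, 2 * s) : ℤ × ZMod (2 ^ N)) ⊔
      AddSubgroup.zmultiples ((y, 2 * t) : ℤ × ZMod (2 ^ N)) := by
    rw [h]; trivial
  rcases AddSubgroup.mem_sup.mp hmem with ⟨p, hp, q, hq, hpq⟩
  rcases AddSubgroup.mem_zmultiples_iff.mp hp with ⟨m, hm⟩
  rcases AddSubgroup.mem_zmultiples_iff.mp hq with ⟨n, hn⟩
  have h2 : (2 : ZMod (2 ^ N)) * ((m : ZMod (2 ^ N)) * s + (n : ZMod (2 ^ N)) * t) = 1 := by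
    have := congrArg Prod.snd hpq
    simp [← hm, ← hn] at this
    rw [← this]
    ring
  have hu : IsUnit ((2 : ℕ) : ZMod (2 ^ N)) := by
    push_cast
    exact IsUnit.of_mul_eq_one _ h2
  haveI : NeZero (2 ^ N) := ⟨by positivity⟩
  have hcop := (ZMod.isUnit_iff_coprime 2 (2 ^ N)).mp hu
  have : Nat.gcd 2 (2 ^ N) = 2 := Nat.gcd_eq_left (dvd_pow_self 2 (by omega))
  simp [Nat.Coprime, this] at hcop

theorem stmt_13 (N : ℕ) (hN : 1 ≤ N) (x y z : ℤ) (a b c : ZMod (2 ^ N))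
    (hab : AddSubgroup.zmultiples ((x, a) : ℤ × ZMod (2 ^ N)) ⊔
      AddSubgroup.zmultiples ((y, b) : ℤ × ZMod (2 ^ N)) = ⊤)
    (hac : AddSubgroup.zmultiples ((x, a) : ℤ × ZMod (2 ^ N)) ⊔
      AddSubgroup.zmultiples ((z, c) : ℤ × ZMod (2 ^ N)) = ⊤)
    (hbc : AddSubgroup.zmultiples ((y, b) : ℤ × ZMod (2 ^ N)) ⊔
      AddSubgroup.zmultiples ((z, c) : ℤ × ZMod (2 ^ N)) = ⊤) :
    ((¬ ∃ t : ZMod (2 ^ N), a = 2 * t) ∧ (¬ ∃ t : ZMod (2 ^ N), b = 2 * t)) ∨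
    ((¬ ∃ t : ZMod (2 ^ N), a = 2 * t) ∧ (¬ ∃ t : ZMod (2 ^ N), c = 2 * t)) ∨
    ((¬ ∃ t : ZMod (2 ^ N), b = 2 * t) ∧ (¬ ∃ t : ZMod (2 ^ N), c = 2 * t)) := by
  by_cases ha : ∃ t : ZMod (2 ^ N), a = 2 * t
  · by_cases hb : ∃ t : ZMod (2 ^ N), b = 2 * t
    · exfalso
      obtain ⟨s, rfl⟩ := ha; obtain ⟨t, rfl⟩ := hb
      exact aux_join_ne_top N hN x y s t hab
    · by_cases hc : ∃ t : ZMod (2 ^ N), c = 2 * t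
      · exfalso
        obtain ⟨s, rfl⟩ := ha; obtain ⟨t, rfl⟩ := hc
        exact aux_join_ne_top N hN x z s t hac
      · exact Or.inr (Or.inr ⟨hb, hc⟩)
  · by_cases hb : ∃ t : ZMod (2 ^ N), b = 2 * t
    · by_cases hc : ∃ t : ZMod (2 ^ N), c = 2 * t
      · exfalso
        obtain ⟨s, rfl⟩ := hb; obtain ⟨t, rfl⟩ := hc
        exact aux_join_ne_top N hN y z s t hbc
      · exact Or.inr (Or.inl ⟨ha, hc⟩)
    · exact Or.inl ⟨ha, hb⟩
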